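/- Positivity of the multiplier kernel does not imply that the multiplier is well defined: in the Hilbert space H = ℓ²(ℕ) with standard orthonormal basis (e_j)_{j ≥ 0}, let P_j denote the orthogonal projection onto the span of e_j. Define bounded operators on H indexed by ℤ by H_ℓ := ℓ² P_ℓ − (ℓ−1)² P_{ℓ−1} for ℓ ≥ 1 and H_ℓ := 0 for ℓ ≤ 0, and set S_ℓ := I_H for all ℓ ∈ ℤ. Then: (i) for every n ∈ ℤ and every L ≥ 1, Σ_{|ℓ| ≤ L} S_{n−ℓ} H_ℓ = L² P_L, and the sequence (L² P_L)_{L ≥ 1} does not converge in the weak operator topology; (ii) nevertheless, for all n, m ∈ ℤ, for each fixed ℓ the WOT sum over ℓ' of S_{n−ℓ} H_ℓ H_{ℓ'}^* S_{m−ℓ'}^* exists, the resulting WOT sum over ℓ exists and equals 0, and the same holds with the order of summation reversed. -/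

import Mathlib

open ContinuousLinearMap Filter
open scoped ENNReal

noncomputable section

/-- The Hilbert space `ℓ²(ℕ)`. -/
abbrev ellTwo : Type := lp (fun _ : ℕ => ℂ) 2

/-- The standard orthonormal basis vectors of `ℓ²(ℕ)`. -/
noncomputable def stdBasis (j : ℕ) : ellTwo := lp.single 2 j (1 : ℂ)

/-- The finite "ball" `{ℓ ∈ ℤ : |ℓ| ≤ L}`. -/
def intBall (L : ℕ) : Finset ℤ := Finset.Icc (-(L : ℤ)) (L : ℤ)

/-- Convergence of a sequence of bounded operators in the weak operator topology. -/
def WOTTendsto {X Y : Type*} [NormedAddCommGroup X] [InnerProductSpace ℂ X]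
    [NormedAddCommGroup Y] [InnerProductSpace ℂ Y]
    (T : ℕ → X →L[ℂ] Y) (T0 : X →L[ℂ] Y) : Prop :=
  ∀ x y, Tendsto (fun L => (inner ℂ (T L x) y : ℂ)) atTop (nhds (inner ℂ (T0 x) y : ℂ))

/-- The coefficients `H_ℓ = ℓ² P_ℓ - (ℓ-1)² P_{ℓ-1}` for `ℓ ≥ 1` and `H_ℓ = 0` for
`ℓ ≤ 0`. -/
noncomputable def Hfam (P : ℕ → ellTwo →L[ℂ] ellTwo) (ℓ : ℤ) : ellTwo →L[ℂ] ellTwo :=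
  if 1 ≤ ℓ then ((ℓ : ℂ) ^ 2 • P ℓ.toNat - ((ℓ - 1 : ℤ) : ℂ) ^ 2 • P (ℓ - 1).toNat) else 0

/-- The coefficients `S_ℓ = I` for all `ℓ ∈ ℤ`. -/
noncomputable def Sfam (_ : ℤ) : ellTwo →L[ℂ] ellTwo := 1

section Aux

variable {P : ℕ → ellTwo →L[ℂ] ellTwo}

lemma inner_stdBasis_left (j : ℕ) (x : ellTwo) : (inner ℂ (stdBasis j) x : ℂ) = x j := by
  rw [stdBasis, lp.inner_single_left]
  simp [RCLike.inner_apply]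

lemma inner_stdBasis (a b : ℕ) :
    (inner ℂ (stdBasis a) (stdBasis b) : ℂ) = if a = b then 1 else 0 := by
  rw [inner_stdBasis_left, stdBasis, lp.single_apply]
  by_cases h : a = b <;> simp [h]

lemma PcompP (hP : ∀ (j : ℕ) (x : ellTwo), P j x = (inner ℂ (stdBasis j) x : ℂ) • stdBasis j)
    {a b : ℕ} (h : a ≠ b) : P a ∘L P b = 0 := by
  ext x
  simp [hP, inner_smul_right, inner_stdBasis, h]

lemma adjoint_P (hP : ∀ (j : ℕ) (x : ellTwo), P j x = (inner ℂ (stdBasis j) x : ℂ) • stdBasis j)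
    (j : ℕ) : adjoint (P j) = P j := by
  symm
  rw [ContinuousLinearMap.eq_adjoint_iff]
  intro x y
  simp only [hP, inner_smul_left, inner_smul_right, inner_conj_symm]
  ring

lemma sumH (hP : ∀ (j : ℕ) (x : ellTwo), P j x = (inner ℂ (stdBasis j) x : ℂ) • stdBasis j) :
    ∀ L : ℕ, ∑ ℓ ∈ intBall L, Hfam P ℓ = ((L : ℂ)) ^ 2 • P L := by
  intro L
  induction L with
  | zero =>
    have h0 : intBall 0 = {(0 : ℤ)} := by ext ℓ; simp [intBall]
    simp [h0, Hfam]
  | succ L ih =>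
    have h1 : intBall (L + 1)
        = insert (-((L : ℤ) + 1)) (insert ((L : ℤ) + 1) (intBall L)) := by
      ext ℓ
      simp only [intBall, Finset.mem_Icc, Finset.mem_insert]
      push_cast
      omega
    have h2 : -((L : ℤ) + 1) ∉ insert ((L : ℤ) + 1) (intBall L) := by
      simp only [intBall, Finset.mem_Icc, Finset.mem_insert]
      omega
    have h3 : ((L : ℤ) + 1) ∉ intBall L := by
      simp only [intBall, Finset.mem_Icc]
      omega
    rw [h1, Finset.sum_insert h2, Finset.sum_insert h3, ih]
    have hneg : Hfam P (-((L : ℤ) + 1)) = 0 := by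
      rw [Hfam, if_neg (by omega)]
    have hpos : Hfam P ((L : ℤ) + 1)
        = ((L : ℂ) + 1) ^ 2 • P (L + 1) - ((L : ℂ)) ^ 2 • P L := by
      rw [Hfam, if_pos (by omega)]
      have ht1 : ((L : ℤ) + 1).toNat = L + 1 := by omega
      have ht2 : ((L : ℤ) + 1 - 1).toNat = L := by omega
      rw [ht1, ht2]
      push_cast
      ring_nf
    rw [hneg, hpos]
    push_cast
    abel

lemma HcompP (hP : ∀ (j : ℕ) (x : ellTwo), P j x = (inner ℂ (stdBasis j) x : ℂ) • stdBasis j)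
    (ℓ : ℤ) (j : ℕ) (h : ℓ.toNat < j) : Hfam P ℓ ∘L P j = 0 := by
  by_cases h1 : 1 ≤ ℓ
  · rw [Hfam, if_pos h1, sub_comp, smul_comp, smul_comp,
      PcompP hP (by omega : ℓ.toNat ≠ j), PcompP hP (by omega : (ℓ - 1).toNat ≠ j)]
    simp
  · rw [Hfam, if_neg h1, zero_comp]

lemma PcompAdjH (hP : ∀ (j : ℕ) (x : ellTwo), P j x = (inner ℂ (stdBasis j) x : ℂ) • stdBasis j)
    (ℓ : ℤ) (j : ℕ) (h : ℓ.toNat < j) : P j ∘L adjoint (Hfam P ℓ) = 0 := by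
  have : P j ∘L adjoint (Hfam P ℓ) = adjoint (Hfam P ℓ ∘L P j) := by
    rw [adjoint_comp, adjoint_P hP]
  rw [this, HcompP hP ℓ j h, map_zero]

lemma summand_eq (a b ℓ ℓ' : ℤ) :
    Sfam a ∘L Hfam P ℓ ∘L adjoint (Hfam P ℓ') ∘L adjoint (Sfam b)
      = Hfam P ℓ ∘L adjoint (Hfam P ℓ') := by
  have h1 : adjoint (Sfam b) = 1 := by
    rw [Sfam, ← star_eq_adjoint, star_one]
  rw [Sfam, h1, one_def, comp_id, id_comp]

end Aux

set_option maxHeartbeats 1000000 in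
/-- **Positivity of the multiplier kernel does not imply that the multiplier is well
defined.**  With `P_j` the orthogonal projection onto the span of the `j`-th standard
basis vector of `ℓ²(ℕ)`, `H_ℓ = ℓ² P_ℓ - (ℓ-1)² P_{ℓ-1}` (`ℓ ≥ 1`, else `0`) and
`S_ℓ = I`: (i) `∑_{|ℓ| ≤ L} S_{n-ℓ} H_ℓ = L² P_L` and `(L² P_L)` has no WOT limit;
(ii) nevertheless the iterated WOT sums of `S_{n-ℓ} H_ℓ H_{ℓ'}* S_{m-ℓ'}*` exist in
either order and equal `0`. -/
theorem pos_kernel_without_welldefined_multiplier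
    (P : ℕ → ellTwo →L[ℂ] ellTwo)
    (hP : ∀ (j : ℕ) (x : ellTwo), P j x = (inner ℂ (stdBasis j) x : ℂ) • stdBasis j) :
    (∀ n : ℤ, ∀ L : ℕ, 1 ≤ L →
      ∑ ℓ ∈ intBall L, Sfam (n - ℓ) ∘L Hfam P ℓ = ((L : ℂ)) ^ 2 • P L) ∧
    (¬ ∃ T : ellTwo →L[ℂ] ellTwo, WOTTendsto (fun L => ((L : ℂ)) ^ 2 • P L) T) ∧
    ∀ n m : ℤ,
      ((∃ G : ℤ → ellTwo →L[ℂ] ellTwo,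
        (∀ ℓ, WOTTendsto
          (fun L' => ∑ ℓ' ∈ intBall L',
            Sfam (n - ℓ) ∘L Hfam P ℓ ∘L adjoint (Hfam P ℓ') ∘L adjoint (Sfam (m - ℓ')))
          (G ℓ)) ∧
        WOTTendsto (fun L => ∑ ℓ ∈ intBall L, G ℓ) 0) ∧
      (∃ G' : ℤ → ellTwo →L[ℂ] ellTwo,
        (∀ ℓ', WOTTendsto
          (fun L => ∑ ℓ ∈ intBall L,
            Sfam (n - ℓ) ∘L Hfam P ℓ ∘L adjoint (Hfam P ℓ') ∘L adjoint (Sfam (m - ℓ')))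
          (G' ℓ')) ∧
        WOTTendsto (fun L' => ∑ ℓ' ∈ intBall L', G' ℓ') 0)) := by
  refine ⟨?_, ?_, ?_⟩
  · intro n L _
    have h : ∀ ℓ ∈ intBall L, Sfam (n - ℓ) ∘L Hfam P ℓ = Hfam P ℓ := by
      intro ℓ _
      rw [Sfam, one_def, id_comp]
    rw [Finset.sum_congr rfl h, sumH hP]
  · rintro ⟨T, hT⟩
    set f : ℕ → ℂ := fun j => if Even j then ((j : ℂ) + 1)⁻¹ else 0 with hf
    have hmem : Memℓp f 2 := by
      apply memℓp_gen
      have h2 : (2 : ℝ≥0∞).toReal = 2 := by norm_num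
      rw [h2]
      have hcmp : Summable (fun j : ℕ => (1 / ((j : ℝ) + 1)) ^ 2) := by
        have h := (summable_nat_add_iff 1).2 (Real.summable_one_div_nat_pow.mpr one_lt_two)
        apply h.congr
        intro n
        rw [div_pow, one_pow]
        push_cast
        ring
      apply Summable.of_nonneg_of_le (fun j => by positivity) _ hcmp
      intro j
      have hnorm : ‖f j‖ ≤ 1 / ((j : ℝ) + 1) := by
        rw [hf]
        by_cases h : Even j
        · simp only [h, if_true]
          rw [norm_inv]
          have : ((j : ℂ) + 1) = ((j + 1 : ℕ) : ℂ) := by push_cast; ring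
          rw [this, Complex.norm_natCast, one_div]
          push_cast
          exact le_rfl
        · simp only [h, if_false, norm_zero]
          positivity
      have h1 : ‖f j‖ ^ (2 : ℝ) = ‖f j‖ ^ (2 : ℕ) := by
        rw [show (2 : ℝ) = ((2 : ℕ) : ℝ) by norm_num, Real.rpow_natCast]
      rw [h1]
      exact pow_le_pow_left₀ (norm_nonneg _) hnorm 2
    set xv : ellTwo := ⟨f, hmem⟩ with hxv
    have hxv_apply : ∀ j, (xv : ∀ _ : ℕ, ℂ) j = f j := fun j => rfl
    have hg : ∀ L : ℕ, (inner ℂ ((((L : ℂ)) ^ 2 • P L) xv) xv : ℂ)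
        = (starRingEnd ℂ) ((L : ℂ) ^ 2) * ((starRingEnd ℂ) (f L) * f L) := by
      intro L
      rw [ContinuousLinearMap.smul_apply, inner_smul_left, hP, inner_smul_left,
        inner_stdBasis_left, hxv_apply]
    have hgeven : ∀ L : ℕ, Even L → (inner ℂ ((((L : ℂ)) ^ 2 • P L) xv) xv : ℂ)
        = ((L : ℂ) / ((L : ℂ) + 1)) ^ 2 := by
      intro L hL
      rw [hg, hf]
      simp only [hL, if_true]
      rw [map_pow, map_natCast, map_inv₀, map_add, map_one, map_natCast]
      field_simp
    have hgodd : ∀ L : ℕ, ¬ Even L → (inner ℂ ((((L : ℂ)) ^ 2 • P L) xv) xv : ℂ) = 0 := by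
      intro L hL
      rw [hg, hf]
      simp [hL]
    have htend := hT xv xv
    have h2k : Tendsto (fun k : ℕ => 2 * k) atTop atTop := by
      apply tendsto_atTop_mono (f := fun k : ℕ => k) (fun k => (by omega : k ≤ 2 * k)) tendsto_id
    have h2k1 : Tendsto (fun k : ℕ => 2 * k + 1) atTop atTop := by
      apply tendsto_atTop_mono (f := fun k : ℕ => k) (fun k => (by omega : k ≤ 2 * k + 1)) tendsto_id
    have hlim : Tendsto (fun n : ℕ => ((n : ℂ) / ((n : ℂ) + 1)) ^ 2) atTop (nhds 1) := by
      have := (tendsto_natCast_div_add_atTop (1 : ℂ)).pow 2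
      simpa using this
    have heven : Tendsto (fun k : ℕ =>
        (inner ℂ (((fun L : ℕ => ((L : ℂ)) ^ 2 • P L) (2 * k)) xv) xv : ℂ)) atTop (nhds 1) := by
      apply (hlim.comp h2k).congr
      intro k
      exact (hgeven (2 * k) (even_two_mul k)).symm
    have hodd : Tendsto (fun k : ℕ =>
        (inner ℂ (((fun L : ℕ => ((L : ℂ)) ^ 2 • P L) (2 * k + 1)) xv) xv : ℂ)) atTop (nhds 0) := by
      have h0 : ∀ k : ℕ, (inner ℂ ((((2 * k + 1 : ℕ) : ℂ) ^ 2 • P (2 * k + 1)) xv) xv : ℂ) = 0 :=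
        fun k => hgodd (2 * k + 1) (by simp [parity_simps])
      simp only [h0]
      exact tendsto_const_nhds
    have hc1 : (inner ℂ (T xv) xv : ℂ) = 1 := tendsto_nhds_unique (htend.comp h2k) heven
    have hc0 : (inner ℂ (T xv) xv : ℂ) = 0 := tendsto_nhds_unique (htend.comp h2k1) hodd
    rw [hc1] at hc0
    exact one_ne_zero hc0
  · intro n m
    have hinner : ∀ (ℓ : ℤ) (L' : ℕ), ℓ.toNat < L' →
        ∑ ℓ' ∈ intBall L', Hfam P ℓ ∘L adjoint (Hfam P ℓ') = 0 := by
      intro ℓ L' h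
      have h1 : ∑ ℓ' ∈ intBall L', Hfam P ℓ ∘L adjoint (Hfam P ℓ')
          = Hfam P ℓ ∘L adjoint (∑ ℓ' ∈ intBall L', Hfam P ℓ') := by
        rw [map_sum]
        simp only [← ContinuousLinearMap.mul_def, Finset.mul_sum]
      rw [h1, sumH hP, ← star_eq_adjoint, star_smul, star_eq_adjoint, adjoint_P hP,
        ← ContinuousLinearMap.mul_def, mul_smul_comm, ContinuousLinearMap.mul_def,
        HcompP hP ℓ L' h, smul_zero]
    have houter : ∀ (ℓ' : ℤ) (L : ℕ), ℓ'.toNat < L →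
        ∑ ℓ ∈ intBall L, Hfam P ℓ ∘L adjoint (Hfam P ℓ') = 0 := by
      intro ℓ' L h
      have h1 : ∑ ℓ ∈ intBall L, Hfam P ℓ ∘L adjoint (Hfam P ℓ')
          = (∑ ℓ ∈ intBall L, Hfam P ℓ) ∘L adjoint (Hfam P ℓ') := by
        simp only [← ContinuousLinearMap.mul_def, ← Finset.sum_mul]
      rw [h1, sumH hP, smul_comp, PcompAdjH hP ℓ' L h, smul_zero]
    refine ⟨⟨fun _ => 0, ?_, ?_⟩, ⟨fun _ => 0, ?_, ?_⟩⟩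
    · intro ℓ x y
      apply tendsto_const_nhds.congr'
      filter_upwards [eventually_gt_atTop ℓ.toNat] with L' hL'
      have h0 : ∑ ℓ' ∈ intBall L',
          Sfam (n - ℓ) ∘L Hfam P ℓ ∘L adjoint (Hfam P ℓ') ∘L adjoint (Sfam (m - ℓ'))
          = 0 := by
        rw [Finset.sum_congr rfl (fun ℓ' _ => summand_eq (n - ℓ) (m - ℓ') ℓ ℓ'),
          hinner ℓ L' hL']
      rw [h0]
    · intro x y
      simp only [Finset.sum_const_zero]
      exact tendsto_const_nhds
    · intro ℓ' x y
      apply tendsto_const_nhds.congr'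
      filter_upwards [eventually_gt_atTop ℓ'.toNat] with L hL
      have h0 : ∑ ℓ ∈ intBall L,
          Sfam (n - ℓ) ∘L Hfam P ℓ ∘L adjoint (Hfam P ℓ') ∘L adjoint (Sfam (m - ℓ'))
          = 0 := by
        rw [Finset.sum_congr rfl (fun ℓ _ => summand_eq (n - ℓ) (m - ℓ') ℓ ℓ'),
          houter ℓ' L hL]
      rw [h0]
    · intro x y
      simp only [Finset.sum_const_zero]
      exact tendsto_const_nhds
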